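/- Let Y_0, Y_1, ..., Y_n be a martingale with respect to a filtration F_0 ⊆ F_1 ⊆ ... ⊆ F_n, with |Y_k - Y_{k-1}| ≤ M almost surely for all k, and suppose the predictable quadratic variation W_n = ∑_{j=1}^n E[(Y_j - Y_{j-1})^2 | F_{j-1}] satisfies W_n ≤ Δ^2 almost surely. Then for every λ > 0, Pr[|Y_n - Y_0| ≥ λ] ≤ 2 exp(-λ^2 / (2(Δ^2 + Mλ/3))). -/

import Mathlib

open MeasureTheory Real

open scoped Nat

lemma two_mul_three_pow_le_factorial (n : ℕ) : (2 * 3 ^ n : ℝ) ≤ (n + 2)! := by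
  induction n with
  | zero => norm_num [Nat.factorial]
  | succ k ih =>
    have : ((k + 1 + 2)! : ℝ) = (k + 3) * (k + 2)! := by
      push_cast [show k + 1 + 2 = (k + 2) + 1 from rfl, Nat.factorial_succ]
      ring
    rw [this]
    calc (2 * 3 ^ (k + 1) : ℝ) = 3 * (2 * 3 ^ k) := by ring
    _ ≤ 3 * (k + 2)! := by nlinarith [ih]
    _ ≤ (k + 3) * (k + 2)! := by
        have : (0:ℝ) ≤ ((k+2)! : ℝ) := by positivity
        nlinarith

lemma exp_le_quadratic {v u : ℝ} (hv : |v| ≤ u) (hu : u < 3) :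
    Real.exp v ≤ 1 + v + v ^ 2 / (2 * (1 - u / 3)) := by
  have hu0 : 0 ≤ u := (abs_nonneg v).trans hv
  have hr1 : u / 3 < 1 := by linarith
  have hr0 : 0 ≤ u / 3 := by linarith
  have hsum : Summable (fun n : ℕ => v ^ n / n !) := Real.summable_pow_div_factorial v
  have hexp : Real.exp v = ∑' n : ℕ, v ^ n / n ! := by
    rw [Real.exp_eq_exp_ℝ, NormedSpace.exp_eq_tsum_div]
  have hsplit : ∑' n : ℕ, v ^ n / n ! = 1 + v + ∑' n : ℕ, v ^ (n + 2) / (n + 2)! := by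
    rw [Summable.tsum_eq_zero_add hsum, Summable.tsum_eq_zero_add (by
      simpa [Function.comp_def] using hsum.comp_injective (add_left_injective 1))]
    simp [Nat.factorial]
    ring
  have hterm : ∀ n : ℕ, v ^ (n + 2) / (n + 2)! ≤ v ^ 2 / 2 * (u / 3) ^ n := by
    intro n
    have h1 : v ^ (n + 2) ≤ v ^ 2 * u ^ n := by
      calc v ^ (n + 2) ≤ |v ^ (n + 2)| := le_abs_self _
      _ = |v| ^ 2 * |v| ^ n := by rw [abs_pow]; ring
      _ ≤ |v| ^ 2 * u ^ n := by gcongr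
      _ = v ^ 2 * u ^ n := by rw [sq_abs]
    have h2 : (2 * 3 ^ n : ℝ) ≤ (n + 2)! := two_mul_three_pow_le_factorial n
    have hf : (0:ℝ) < (n + 2)! := by positivity
    rw [div_le_iff₀ hf]
    have heq : v ^ 2 / 2 * (u / 3) ^ n * (n + 2)! = v ^ 2 * u ^ n * ((n+2)! / (2 * 3 ^ n)) := by
      rw [div_pow]
      field_simp
    rw [heq]
    have h3 : (1:ℝ) ≤ (n+2)! / (2 * 3 ^ n) := by
      rw [le_div_iff₀ (by positivity)]
      linarith
    nlinarith [sq_nonneg v, pow_nonneg hu0 n, h1,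
      mul_le_mul_of_nonneg_left h3 (mul_nonneg (sq_nonneg v) (pow_nonneg hu0 n))]
  have hgeo : Summable (fun n : ℕ => v ^ 2 / 2 * (u / 3) ^ n) :=
    (summable_geometric_of_lt_one hr0 hr1).mul_left _
  have htail : ∑' n : ℕ, v ^ (n + 2) / (n + 2)! ≤ v ^ 2 / 2 * (1 - u / 3)⁻¹ := by
    calc ∑' n : ℕ, v ^ (n + 2) / (n + 2)! ≤ ∑' n : ℕ, v ^ 2 / 2 * (u / 3) ^ n := by
          apply Summable.tsum_le_tsum hterm _ hgeo
          simpa [Function.comp_def] using hsum.comp_injective (add_left_injective 2)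
    _ = v ^ 2 / 2 * (1 - u / 3)⁻¹ := by
        rw [tsum_mul_left, tsum_geometric_of_lt_one hr0 hr1]
  rw [hexp, hsplit]
  have heq2 : v ^ 2 / 2 * (1 - u/3)⁻¹ = v ^ 2 / (2 * (1 - u/3)) := by
    field_simp
  linarith [heq2 ▸ htail]

lemma freedman_one_sided {Ω : Type*} {m0 : MeasurableSpace Ω} (μ : Measure Ω)
    [IsProbabilityMeasure μ] (ℱ : MeasureTheory.Filtration ℕ m0)
    (Y : ℕ → Ω → ℝ) (hY : Martingale Y ℱ μ) (n : ℕ) (M Δ lam : ℝ)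
    (hM : 0 < M) (hΔ : 0 < Δ) (hlam : 0 < lam)
    (hbdd : ∀ k ∈ Finset.Icc 1 n, ∀ᵐ ω ∂μ, |Y k ω - Y (k - 1) ω| ≤ M)
    (hvar : ∀ᵐ ω ∂μ,
      ∑ j ∈ Finset.Icc 1 n, (μ[fun ω' => (Y j ω' - Y (j - 1) ω') ^ 2 | ℱ (j - 1)]) ω
        ≤ Δ ^ 2) :
    μ {ω | lam ≤ Y n ω - Y 0 ω} ≤
      ENNReal.ofReal (Real.exp (-(lam ^ 2) / (2 * (Δ ^ 2 + M * lam / 3)))) := by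
  set D : ℝ := Δ ^ 2 + M * lam / 3 with hDdef
  have hD0 : 0 < D := by positivity
  set θ : ℝ := lam / D with hθdef
  have hθ0 : 0 < θ := by positivity
  have huM : θ * M < 3 := by
    rw [hθdef, div_mul_eq_mul_div, div_lt_iff₀ hD0, hDdef]
    nlinarith [mul_pos hΔ hΔ]
  have h1u : 1 - θ * M / 3 = Δ ^ 2 / D := by
    rw [hθdef]; field_simp; ring
  have h1u0 : 0 < 1 - θ * M / 3 := by rw [h1u]; positivity
  set c : ℝ := θ ^ 2 / (2 * (1 - θ * M / 3)) with hcdef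
  have hc0 : 0 ≤ c := by
    rw [hcdef]; positivity
  -- pointwise exponential bound
  have hkey : ∀ x : ℝ, |x| ≤ M → Real.exp (θ * x) ≤ 1 + θ * x + c * x ^ 2 := by
    intro x hx
    have h1 : |θ * x| ≤ θ * M := by
      rw [abs_mul, abs_of_pos hθ0]
      exact mul_le_mul_of_nonneg_left hx hθ0.le
    have h2 := exp_le_quadratic h1 huM
    have h3 : (θ * x) ^ 2 / (2 * (1 - θ * M / 3)) = c * x ^ 2 := by
      rw [hcdef]; field_simp
    linarith [h3 ▸ h2]
  -- definitions
  set V : ℕ → Ω → ℝ := fun j => μ[fun ω' => (Y j ω' - Y (j - 1) ω') ^ 2 | ℱ (j - 1)] with hVdef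
  set W : ℕ → Ω → ℝ := fun k ω => ∑ j ∈ Finset.Icc 1 k, V j ω with hWdef
  set Z : ℕ → Ω → ℝ := fun k ω => Real.exp (θ * (Y k ω - Y 0 ω) - c * W k ω) with hZdef
  have hWn : ∀ᵐ ω ∂μ, W n ω ≤ Δ ^ 2 := hvar
  -- measurability
  have hYm : ∀ k, StronglyMeasurable (Y k) := fun k => (hY.stronglyMeasurable k).mono (ℱ.le k)
  have hVm0 : ∀ j, StronglyMeasurable (V j) := fun j =>
    (stronglyMeasurable_condExp).mono (ℱ.le _)
  have hWm : ∀ k, StronglyMeasurable (W k) := fun k =>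
    Finset.stronglyMeasurable_fun_sum _ fun j _ => hVm0 j
  have hZm : ∀ k, StronglyMeasurable (Z k) := fun k =>
    Real.continuous_exp.comp_stronglyMeasurable
      ((((hYm k).sub (hYm 0)).const_mul θ).sub ((hWm k).const_mul c))
  -- a.e. facts
  have hXbdd : ∀ᵐ ω ∂μ, ∀ j, j ∈ Finset.Icc 1 n → |Y j ω - Y (j - 1) ω| ≤ M := by
    rw [ae_all_iff]
    intro j
    by_cases hj : j ∈ Finset.Icc 1 n
    · filter_upwards [hbdd j hj] with ω h _
      exact h
    · filter_upwards with ω h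
      exact absurd h hj
  have hVnn : ∀ᵐ ω ∂μ, ∀ j, 0 ≤ V j ω := by
    rw [ae_all_iff]
    intro j
    filter_upwards [condExp_nonneg (m := ℱ (j - 1)) (μ := μ)
      (f := fun ω' => (Y j ω' - Y (j - 1) ω') ^ 2)
      (Filter.Eventually.of_forall fun ω => sq_nonneg _)] with ω h
    exact h
  have hWnn : ∀ᵐ ω ∂μ, ∀ k, 0 ≤ W k ω := by
    filter_upwards [hVnn] with ω h k
    exact Finset.sum_nonneg fun j _ => h j
  have hYbdd : ∀ᵐ ω ∂μ, ∀ k, k ≤ n → |Y k ω - Y 0 ω| ≤ k * M := by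
    filter_upwards [hXbdd] with ω h
    intro k
    induction k with
    | zero => intro _; simp
    | succ m ih =>
      intro hk
      have h1 := h (m + 1) (Finset.mem_Icc.2 ⟨Nat.succ_le_succ (Nat.zero_le m), hk⟩)
      simp only [Nat.add_sub_cancel] at h1
      have h2 := ih (Nat.le_of_succ_le hk)
      calc |Y (m + 1) ω - Y 0 ω| ≤ |Y (m + 1) ω - Y m ω| + |Y m ω - Y 0 ω| :=
            abs_sub_le _ _ _
      _ ≤ M + m * M := add_le_add h1 h2
      _ = (↑(m + 1) : ℝ) * M := by push_cast; ring
  -- integrability of Z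
  have hZnn : ∀ k ω, 0 ≤ Z k ω := fun k ω => (Real.exp_pos _).le
  have hZint : ∀ k, k ≤ n → Integrable (Z k) μ := by
    intro k hk
    refine Integrable.mono' (integrable_const (Real.exp (θ * (k * M))))
      (hZm k).aestronglyMeasurable ?_
    filter_upwards [hYbdd, hWnn] with ω hy hw
    rw [Real.norm_eq_abs, abs_of_pos (Real.exp_pos _)]
    apply Real.exp_le_exp.2
    have h1 : Y k ω - Y 0 ω ≤ k * M := (le_abs_self _).trans (hy k hk)
    nlinarith [mul_nonneg hc0 (hw k)]
  -- the induction
  have hind : ∀ k, k ≤ n → ∫ ω, Z k ω ∂μ ≤ 1 := by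
    intro k
    induction k with
    | zero =>
      intro _
      have : Z 0 = fun _ => (1 : ℝ) := by
        funext ω
        simp [hZdef, hWdef]
      rw [this]
      simp
    | succ m ih =>
      intro hk
      have hm : m ≤ n := Nat.le_of_succ_le hk
      have ihm := ih hm
      set X : Ω → ℝ := fun ω => Y (m + 1) ω - Y m ω with hXdef
      set G : Ω → ℝ := fun ω => Real.exp (θ * X ω) with hGdef
      set A : Ω → ℝ := fun ω => Real.exp (θ * (Y m ω - Y 0 ω) - c * W (m + 1) ω) with hAdef
      have hXb : ∀ᵐ ω ∂μ, |X ω| ≤ M := by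
        filter_upwards [hXbdd] with ω h
        have := h (m + 1) (Finset.mem_Icc.2 ⟨Nat.succ_le_succ (Nat.zero_le m), hk⟩)
        simpa [hXdef] using this
      have hXint : Integrable X μ := (hY.integrable (m + 1)).sub (hY.integrable m)
      have hXm : StronglyMeasurable X := (hYm (m + 1)).sub (hYm m)
      have hX2int : Integrable (fun ω => X ω ^ 2) μ := by
        refine Integrable.mono' (integrable_const (M ^ 2))
          (hXm.pow 2).aestronglyMeasurable ?_
        filter_upwards [hXb] with ω h
        rw [Real.norm_eq_abs, abs_of_nonneg (sq_nonneg _)]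
        calc X ω ^ 2 = |X ω| ^ 2 := (sq_abs _).symm
        _ ≤ M ^ 2 := by gcongr
      have hGint : Integrable G μ := by
        refine Integrable.mono' (integrable_const (Real.exp (θ * M)))
          (Real.continuous_exp.comp_stronglyMeasurable
            (hXm.const_mul θ)).aestronglyMeasurable ?_
        filter_upwards [hXb] with ω h
        rw [Real.norm_eq_abs, abs_of_pos (Real.exp_pos _)]
        apply Real.exp_le_exp.2
        exact mul_le_mul_of_nonneg_left ((le_abs_self _).trans h) hθ0.le
      have hAsm : StronglyMeasurable[ℱ m] A := by
        apply Real.continuous_exp.comp_stronglyMeasurable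
        apply StronglyMeasurable.sub
        · exact ((hY.stronglyAdapted m).sub ((hY.stronglyAdapted 0).mono (ℱ.mono (Nat.zero_le m)))).const_mul θ
        · refine StronglyMeasurable.const_mul ?_ c
          refine Finset.stronglyMeasurable_fun_sum _ fun j hj => ?_
          have hj' : j - 1 ≤ m := by
            have := (Finset.mem_Icc.1 hj).2
            omega
          exact (stronglyMeasurable_condExp).mono (ℱ.mono hj')
      have hZAG : Z (m + 1) = A * G := by
        funext ω
        simp only [hZdef, hAdef, hGdef, hXdef, Pi.mul_apply]
        rw [← Real.exp_add]
        congr 1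
        ring
      have hWsucc : ∀ ω, W (m + 1) ω = W m ω + V (m + 1) ω := by
        intro ω
        simp only [hWdef]
        rw [Finset.sum_Icc_succ_top (Nat.one_le_iff_ne_zero.2 (Nat.succ_ne_zero m))]
      -- conditional expectation computation
      have hcondX : μ[X|ℱ m] =ᵐ[μ] 0 := by
        have h1 : μ[X|ℱ m] =ᵐ[μ] μ[Y (m + 1)|ℱ m] - μ[Y m|ℱ m] :=
          condExp_sub (hY.integrable (m + 1)) (hY.integrable m) _
        have h2 := hY.condExp_ae_eq (Nat.le_succ m)
        have h3 := hY.condExp_ae_eq (le_refl m)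
        filter_upwards [h1, h2, h3] with ω e1 e2 e3
        simp only [Pi.sub_apply, Pi.zero_apply] at *
        rw [e1, e2, e3, sub_self]
      have hcondG : μ[G|ℱ m] ≤ᵐ[μ] fun ω => 1 + c * V (m + 1) ω := by
        set R : Ω → ℝ := fun ω => 1 + θ * X ω + c * X ω ^ 2 with hRdef
        have hRint : Integrable R μ := by
          apply Integrable.add
          apply Integrable.add
          · exact integrable_const 1
          · exact hXint.const_mul θ
          · exact hX2int.const_mul c
        have step1 : μ[G|ℱ m] ≤ᵐ[μ] μ[R|ℱ m] := by
          apply condExp_mono hGint hRint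
          filter_upwards [hXb] with ω h
          exact hkey (X ω) h
        have step2 : μ[R|ℱ m] =ᵐ[μ]
            (fun _ => (1:ℝ)) + θ • μ[X|ℱ m] + c • μ[fun ω => X ω ^ 2|ℱ m] := by
          have e0 : R = (fun _ => (1:ℝ)) + θ • X + c • (fun ω => X ω ^ 2) := by
            funext ω
            simp [hRdef, smul_eq_mul]
          rw [e0]
          have e1 := condExp_add (μ := μ) (m := ℱ m)
            ((integrable_const (1:ℝ)).add (hXint.smul θ)) ((hX2int.smul c))
          have e2 := condExp_add (μ := μ) (m := ℱ m)
            (integrable_const (1:ℝ)) (hXint.smul θ)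
          have e3 := condExp_smul (μ := μ) (m := ℱ m) θ X
          have e4 := condExp_smul (μ := μ) (m := ℱ m) c (fun ω => X ω ^ 2)
          have e5 : μ[(fun _ => (1:ℝ))|ℱ m] = fun _ => (1:ℝ) := condExp_const (ℱ.le m) 1
          filter_upwards [e1, e2, e3, e4] with ω a1 a2 a3 a4
          simp only [Pi.add_apply, Pi.smul_apply, smul_eq_mul] at *
          rw [a1, a2, a3, a4]
          have : (μ[fun _ => (1:ℝ)|ℱ m]) ω = 1 := by rw [e5]
          rw [this]
        have hVeq : μ[fun ω => X ω ^ 2|ℱ m] = V (m + 1) := by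
          simp only [hVdef, hXdef, Nat.add_sub_cancel]
        filter_upwards [step1, step2, hcondX] with ω s1 s2 s3
        calc (μ[G|ℱ m]) ω ≤ (μ[R|ℱ m]) ω := s1
        _ = 1 + θ * (μ[X|ℱ m]) ω + c * (μ[fun ω => X ω ^ 2|ℱ m]) ω := by
            rw [s2]; simp [smul_eq_mul]
        _ = 1 + c * V (m + 1) ω := by
            rw [hVeq] at *
            simp only [Pi.zero_apply] at s3
            rw [s3]
            ring
      have hpull : μ[Z (m + 1)|ℱ m] =ᵐ[μ] A * μ[G|ℱ m] := by
        rw [hZAG]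
        exact condExp_mul_of_stronglyMeasurable_left hAsm (hZAG ▸ hZint (m + 1) hk) hGint
      have hae : μ[Z (m + 1)|ℱ m] ≤ᵐ[μ] Z m := by
        filter_upwards [hpull, hcondG, hVnn] with ω e1 e2 e3
        rw [e1]
        simp only [Pi.mul_apply]
        set t : ℝ := c * V (m + 1) ω with htdef
        have ht0 : 0 ≤ t := mul_nonneg hc0 (e3 (m + 1))
        have hA : A ω = Z m ω * Real.exp (-t) := by
          rw [hAdef, hZdef, ← Real.exp_add]
          simp only
          congr 1
          rw [hWsucc ω, htdef]
          ring
        calc A ω * (μ[G|ℱ m]) ω ≤ A ω * (1 + t) := by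
              apply mul_le_mul_of_nonneg_left _ (Real.exp_pos _).le
              exact e2
        _ = Z m ω * (Real.exp (-t) * (1 + t)) := by rw [hA]; ring
        _ ≤ Z m ω * 1 := by
            apply mul_le_mul_of_nonneg_left _ (hZnn m ω)
            have e5 : Real.exp (-t) * Real.exp t = 1 := by
              rw [← Real.exp_add]; simp
            calc Real.exp (-t) * (1 + t) ≤ Real.exp (-t) * Real.exp t := by
                  apply mul_le_mul_of_nonneg_left _ (Real.exp_pos _).le
                  rw [add_comm]
                  exact Real.add_one_le_exp t
            _ = 1 := e5
        _ = Z m ω := mul_one _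
      calc ∫ ω, Z (m + 1) ω ∂μ = ∫ ω, (μ[Z (m + 1)|ℱ m]) ω ∂μ :=
            (integral_condExp (ℱ.le m)).symm
      _ ≤ ∫ ω, Z m ω ∂μ := integral_mono_ae integrable_condExp (hZint m hm) hae
      _ ≤ 1 := ihm
  -- Markov
  set ε : ℝ := Real.exp (θ * lam - c * Δ ^ 2) with hεdef
  have hεpos : 0 < ε := Real.exp_pos _
  have hsub : {ω | lam ≤ Y n ω - Y 0 ω} ≤ᵐ[μ] {ω | ε ≤ Z n ω} := by
    filter_upwards [hWn] with ω hw hmem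
    show ε ≤ Z n ω
    rw [hεdef, hZdef]
    apply Real.exp_le_exp.2
    have h1 : lam ≤ Y n ω - Y 0 ω := hmem
    nlinarith [mul_le_mul_of_nonneg_left hw hc0]
  have hmarkov := mul_meas_ge_le_integral_of_nonneg
    (Filter.Eventually.of_forall (hZnn n)) (hZint n le_rfl) ε
  have h2 : (μ {x | ε ≤ Z n x}).toReal ≤ ε⁻¹ := by
    rw [← one_div, le_div_iff₀ hεpos]
    rw [measureReal_def] at hmarkov
    nlinarith [hmarkov, hind n le_rfl]
  have hεinv : ε⁻¹ = Real.exp (-(lam ^ 2) / (2 * D)) := by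
    rw [hεdef, ← Real.exp_neg]
    congr 1
    rw [hcdef, hθdef, h1u]
    have hd : D ≠ 0 := hD0.ne'
    have hΔ' : Δ ≠ 0 := hΔ.ne'
    field_simp
    ring
  calc μ {ω | lam ≤ Y n ω - Y 0 ω} ≤ μ {x | ε ≤ Z n x} := measure_mono_ae hsub
  _ = ENNReal.ofReal ((μ {x | ε ≤ Z n x}).toReal) :=
      (ENNReal.ofReal_toReal (measure_ne_top μ _)).symm
  _ ≤ ENNReal.ofReal (ε⁻¹) := ENNReal.ofReal_le_ofReal h2
  _ = ENNReal.ofReal (Real.exp (-(lam ^ 2) / (2 * D))) := by rw [hεinv]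

/-- Freedman's martingale inequality (method of bounded variance): if the martingale
`Y₀, ..., Yₙ` has increments bounded by `M` and predictable quadratic variation
`Wₙ = ∑_{j=1}^n E[(Yⱼ - Yⱼ₋₁)² | F_{j-1}]` bounded by `Δ²`, then
`Pr[|Yₙ - Y₀| ≥ λ] ≤ 2 exp(-λ²/(2(Δ² + Mλ/3)))`. -/
theorem freedman_inequality {Ω : Type*} {m0 : MeasurableSpace Ω} (μ : Measure Ω)
    [IsProbabilityMeasure μ] (ℱ : MeasureTheory.Filtration ℕ m0)
    (Y : ℕ → Ω → ℝ) (hY : Martingale Y ℱ μ) (n : ℕ) (M Δ lam : ℝ)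
    (hM : 0 < M) (hΔ : 0 < Δ) (hlam : 0 < lam)
    (hbdd : ∀ k ∈ Finset.Icc 1 n, ∀ᵐ ω ∂μ, |Y k ω - Y (k - 1) ω| ≤ M)
    (hvar : ∀ᵐ ω ∂μ,
      ∑ j ∈ Finset.Icc 1 n, (μ[fun ω' => (Y j ω' - Y (j - 1) ω') ^ 2 | ℱ (j - 1)]) ω
        ≤ Δ ^ 2) :
    μ {ω | lam ≤ |Y n ω - Y 0 ω|} ≤
      ENNReal.ofReal (2 * Real.exp (-(lam ^ 2) / (2 * (Δ ^ 2 + M * lam / 3)))) := by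
  have h1 := freedman_one_sided μ ℱ Y hY n M Δ lam hM hΔ hlam hbdd hvar
  have hbdd' : ∀ k ∈ Finset.Icc 1 n, ∀ᵐ ω ∂μ,
      |(-Y) k ω - (-Y) (k - 1) ω| ≤ M := by
    intro k hk
    filter_upwards [hbdd k hk] with ω h
    have : (-Y) k ω - (-Y) (k - 1) ω = -(Y k ω - Y (k - 1) ω) := by
      simp [Pi.neg_apply]; ring
    rw [this, abs_neg]
    exact h
  have hfun : ∀ j : ℕ, (fun ω' => ((-Y) j ω' - (-Y) (j - 1) ω') ^ 2)
      = (fun ω' => (Y j ω' - Y (j - 1) ω') ^ 2) := by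
    intro j
    funext ω'
    simp [Pi.neg_apply]
    ring
  have hvar' : ∀ᵐ ω ∂μ,
      ∑ j ∈ Finset.Icc 1 n, (μ[fun ω' => ((-Y) j ω' - (-Y) (j - 1) ω') ^ 2 | ℱ (j - 1)]) ω
        ≤ Δ ^ 2 := by
    simp only [hfun]
    exact hvar
  have h2 := freedman_one_sided μ ℱ (-Y) hY.neg n M Δ lam hM hΔ hlam hbdd' hvar'
  have hsub : {ω | lam ≤ |Y n ω - Y 0 ω|} ⊆
      {ω | lam ≤ Y n ω - Y 0 ω} ∪ {ω | lam ≤ (-Y) n ω - (-Y) 0 ω} := by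
    intro ω h
    have h'' : lam ≤ |Y n ω - Y 0 ω| := h
    rcases le_abs.1 h'' with h' | h'
    · exact Or.inl h'
    · right
      show lam ≤ (-Y) n ω - (-Y) 0 ω
      simp only [Pi.neg_apply]
      linarith [h']
  calc μ {ω | lam ≤ |Y n ω - Y 0 ω|}
      ≤ μ ({ω | lam ≤ Y n ω - Y 0 ω} ∪ {ω | lam ≤ (-Y) n ω - (-Y) 0 ω}) := measure_mono hsub
  _ ≤ μ {ω | lam ≤ Y n ω - Y 0 ω} + μ {ω | lam ≤ (-Y) n ω - (-Y) 0 ω} := measure_union_le _ _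
  _ ≤ ENNReal.ofReal (Real.exp (-(lam ^ 2) / (2 * (Δ ^ 2 + M * lam / 3))))
      + ENNReal.ofReal (Real.exp (-(lam ^ 2) / (2 * (Δ ^ 2 + M * lam / 3)))) :=
      add_le_add h1 h2
  _ = ENNReal.ofReal (2 * Real.exp (-(lam ^ 2) / (2 * (Δ ^ 2 + M * lam / 3)))) := by
      rw [← ENNReal.ofReal_add (Real.exp_pos _).le (Real.exp_pos _).le]
      congr 1
      ring
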